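/- Assume that for every v in the range of L the set { C(x) : x ∈ E, L x = v } is bounded below, and let S := { w ∈ ker L : C(w) = 0 }. Assume Monti's condition: there exists a finite-dimensional linear subspace V ⊆ E such that every element of E can be written as a sum of an element of V and an element of S (S has finite codimension in E). Then the infimum is attained over every fiber: for every v in the range of L there exists u ∈ E with L u = v and C(u) = Q(v). (Lemma 4.19: Monti's condition implies existence of solutions of the characteristic optimal control problem.) -/

import Mathlib

noncomputable section

/-- The set of values of the quadratic cost `C(x) = B(x,x)` over the fiber
`{x : L x = v}`. Its infimum (when finite) is the value function
`Q(v)` ('minimal 2-jet'). -/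
def fiberCosts {E F : Type*} [AddCommGroup E] [Module ℝ E]
    [AddCommGroup F] [Module ℝ F]
    (L : E →ₗ[ℝ] F) (B : E →ₗ[ℝ] E →ₗ[ℝ] ℝ) (v : F) : Set ℝ :=
  { c | ∃ x : E, L x = v ∧ B x x = c }

/-- If `m ≤ c + t * b` for all real `t`, then `b = 0`. -/
lemma lin_bdd_aux {c b m : ℝ} (h : ∀ t : ℝ, m ≤ c + t * b) : b = 0 := by
  by_contra hb
  have := h ((m - 1 - c) / b)
  rw [div_mul_cancel₀ _ hb] at this
  linarith

/-- A quadratic functional on a finite-dimensional real vector space which is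
bounded below attains its infimum. -/
lemma quad_min (K : Type*) [AddCommGroup K] [Module ℝ K] [FiniteDimensional ℝ K]
    (Bk : K →ₗ[ℝ] K →ₗ[ℝ] ℝ) (hs : ∀ x y : K, Bk x y = Bk y x) (l : K →ₗ[ℝ] ℝ)
    (m : ℝ) (hm : ∀ z : K, m ≤ Bk z z + l z) :
    ∃ z0 : K, ∀ z : K, Bk z0 z0 + l z0 ≤ Bk z z + l z := by
  -- positive semidefiniteness
  have hpsd : ∀ z : K, 0 ≤ Bk z z := by
    intro z
    by_contra hneg
    push_neg at hneg
    set a := Bk z z with ha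
    set b := l z with hb
    have key : ∀ t : ℝ, m ≤ t ^ 2 * a + t * b := by
      intro t
      have h1 : Bk (t • z) (t • z) + l (t • z) = t ^ 2 * a + t * b := by
        simp only [map_smul, LinearMap.smul_apply, smul_eq_mul, ← ha, ← hb]
        ring
      have := hm (t • z)
      linarith [h1 ▸ this, this, h1.symm.le, h1.le]
    -- use t and -t to kill the linear part
    have key2 : ∀ t : ℝ, 2 * m ≤ 2 * (t ^ 2 * a) := by
      intro t
      have h1 := key t
      have h2 := key (-t)
      have : (-t) ^ 2 = t ^ 2 := by ring
      rw [this] at h2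
      linarith
    -- pick t with t ^ 2 * a = m - 1
    have hm0 : m ≤ 0 := by
      have := key2 0
      norm_num at this
      linarith
    have hane : a ≠ 0 := ne_of_lt hneg
    have hpos : 0 ≤ (m - 1) / a := by
      rw [div_nonneg_iff]
      right
      constructor <;> linarith
    set t : ℝ := Real.sqrt ((m - 1) / a) with ht
    have ht2 : t ^ 2 = (m - 1) / a := Real.sq_sqrt hpos
    have hta : t ^ 2 * a = m - 1 := by
      rw [ht2]
      field_simp
    have := key2 t
    rw [hta] at this
    linarith
  -- the null space kills both the form and the linear part
  have hnull : ∀ z : K, Bk z z = 0 → (∀ x : K, Bk x z = 0) ∧ l z = 0 := by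
    intro z hz
    have hlz : l z = 0 := by
      refine lin_bdd_aux (c := 0) (m := m) ?_
      intro t
      have h1 : Bk (t • z) (t • z) + l (t • z) = 0 + t * l z := by
        simp only [map_smul, map_add, LinearMap.smul_apply, smul_eq_mul, hz]
        ring
      have := hm (t • z)
      linarith [h1 ▸ this]
    refine ⟨?_, hlz⟩
    intro x
    refine lin_bdd_aux (c := Bk x x + l x) (m := m) ?_
    intro t
    have h1 : Bk (x + (t / 2) • z) (x + (t / 2) • z) + l (x + (t / 2) • z)
        = Bk x x + l x + t * Bk x z := by
      simp only [map_add, map_smul, LinearMap.add_apply, LinearMap.smul_apply,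
        smul_eq_mul, hz, hlz]
      rw [hs z x]
      ring
    have := hm (x + (t / 2) • z)
    rw [h1] at this
    linarith
  -- the radical as a submodule
  set N : Submodule ℝ K := LinearMap.ker Bk with hN
  -- range of Bk equals dual annihilator of N
  have hrange_le : LinearMap.range Bk ≤ N.dualAnnihilator := by
    rintro f ⟨z, rfl⟩
    rw [Submodule.mem_dualAnnihilator]
    intro n hn
    have : Bk n = 0 := hn
    rw [hs z n, this]
    rfl
  have hfr1 : Module.finrank ℝ (LinearMap.range Bk) + Module.finrank ℝ N
      = Module.finrank ℝ K := LinearMap.finrank_range_add_finrank_ker Bk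
  have hfr2 : Module.finrank ℝ N.dualAnnihilator + Module.finrank ℝ N
      = Module.finrank ℝ K := by
    have heq := LinearEquiv.finrank_eq (R := ℝ) (M := K ⧸ N)
      (N := { x // x ∈ Submodule.dualAnnihilator N }) (Subspace.quotEquivAnnihilator N)
    have hq := Submodule.finrank_quotient_add_finrank N
    rw [heq] at hq
    exact hq
  have hrange_eq : LinearMap.range Bk = N.dualAnnihilator :=
    Submodule.eq_of_le_of_finrank_eq hrange_le
      (Nat.add_right_cancel (hfr1.trans hfr2.symm))
  -- l lies in the dual annihilator of N
  have hl_mem : l ∈ N.dualAnnihilator := by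
    rw [Submodule.mem_dualAnnihilator]
    intro n hn
    have hBn : Bk n = 0 := hn
    have : Bk n n = 0 := by rw [hBn]; rfl
    exact (hnull n this).2
  -- solve the normal equations: 2 Bk z0 + l = 0
  have : (-(1 / 2 : ℝ)) • l ∈ LinearMap.range Bk := by
    rw [hrange_eq]
    exact Submodule.smul_mem _ _ hl_mem
  obtain ⟨z0, hz0⟩ := this
  refine ⟨z0, fun z => ?_⟩
  have hz0' : ∀ h : K, Bk z0 h = -(1 / 2) * l h := by
    intro h
    have := congrArg (fun f => f h) hz0
    simpa using this
  set h := z - z0 with hh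
  have hzh : z = z0 + h := by rw [hh]; abel
  have expand : Bk z z + l z = (Bk z0 z0 + l z0) + Bk h h := by
    rw [hzh]
    simp only [map_add, LinearMap.add_apply]
    have h1 := hs h z0
    have h2 := hz0' h
    linarith
  have := hpsd h
  linarith

/-- **Lemma 4.19.** Assume every fiber cost set is bounded below and let
`S := { w ∈ ker L : C(w) = 0 }`. Under Monti's condition — there is a
finite-dimensional subspace `V ⊆ E` such that every element of `E` is a sum
of an element of `V` and an element of `S` — the infimum is attained over
every fiber: for every `v` in the range of `L` there is `u` with `L u = v`
and `C(u) = Q(v)`. -/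
theorem monti_condition_gives_solutions
    (E F : Type*) [AddCommGroup E] [Module ℝ E]
    [AddCommGroup F] [Module ℝ F] [FiniteDimensional ℝ F]
    (L : E →ₗ[ℝ] F) (B : E →ₗ[ℝ] E →ₗ[ℝ] ℝ)
    (hBsymm : ∀ x y : E, B x y = B y x)
    (hbdd : ∀ v ∈ LinearMap.range L, BddBelow (fiberCosts L B v))
    (hmonti : ∃ V : Submodule ℝ E, FiniteDimensional ℝ V ∧
      ∀ x : E, ∃ y ∈ V, ∃ w : E, L w = 0 ∧ B w w = 0 ∧ x = y + w) :
    ∀ v ∈ LinearMap.range L, ∃ u : E, L u = v ∧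
      B u u = sInf (fiberCosts L B v) := by
  intro v hv
  obtain ⟨x₀, hx₀⟩ := hv
  obtain ⟨V, hVfd, hdec⟩ := hmonti
  obtain ⟨m, hm⟩ := hbdd v ⟨x₀, hx₀⟩
  have hm' : ∀ x : E, L x = v → m ≤ B x x := fun x hx => hm ⟨x, hx, rfl⟩
  -- Key: null directions in the kernel are B-orthogonal to any fiber point
  have key : ∀ x w : E, L x = v → L w = 0 → B w w = 0 → B x w = 0 := by
    intro x w hx hw hww
    refine lin_bdd_aux (c := B x x) (m := m) ?_
    intro t
    have hfib : L (x + (t / 2) • w) = v := by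
      simp [map_add, map_smul, hx, hw]
    have hexp : B (x + (t / 2) • w) (x + (t / 2) • w) = B x x + t * B x w := by
      simp only [map_add, map_smul, LinearMap.add_apply, LinearMap.smul_apply,
        smul_eq_mul, hww]
      rw [hBsymm w x]
      ring
    have := hm' _ hfib
    rw [hexp] at this
    linarith
  -- decompose the base point
  obtain ⟨y₀, hy₀V, w₀, hw₀1, hw₀2, hxy₀⟩ := hdec x₀
  have hLy₀ : L y₀ = v := by
    have : L x₀ = L y₀ + L w₀ := by rw [hxy₀, map_add]
    rw [hx₀, hw₀1, add_zero] at this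
    exact this.symm
  -- the finite-dimensional space
  set K : Submodule ℝ E := V ⊓ LinearMap.ker L with hK
  haveI : FiniteDimensional ℝ K := Submodule.finiteDimensional_of_le inf_le_left
  set Bk : K →ₗ[ℝ] K →ₗ[ℝ] ℝ := B.compl₁₂ K.subtype K.subtype with hBk
  set l : K →ₗ[ℝ] ℝ := (2 : ℝ) • ((B y₀).comp K.subtype) with hl
  have hBkapp : ∀ z z' : K, Bk z z' = B (z : E) (z' : E) := fun _ _ => rfl
  have hlapp : ∀ z : K, l z = 2 * B y₀ (z : E) := fun _ => rfl
  have hsK : ∀ z z' : K, Bk z z' = Bk z' z := fun z z' => hBsymm _ _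
  -- fiber membership of perturbed points and the quadratic expansion
  have hfibK : ∀ z : K, L (y₀ + (z : E)) = v := by
    intro z
    have hz : (z : E) ∈ LinearMap.ker L := z.2.2
    simp [map_add, hLy₀, LinearMap.mem_ker.mp hz]
  have hexpK : ∀ z : K, B (y₀ + (z : E)) (y₀ + (z : E))
      = B y₀ y₀ + (Bk z z + l z) := by
    intro z
    rw [hBkapp, hlapp]
    simp only [map_add, LinearMap.add_apply]
    have := hBsymm (z : E) y₀
    linarith
  -- boundedness below of the finite-dimensional problem
  have hbddK : ∀ z : K, m - B y₀ y₀ ≤ Bk z z + l z := by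
    intro z
    have := hm' _ (hfibK z)
    rw [hexpK z] at this
    linarith
  obtain ⟨z0, hz0⟩ := quad_min K Bk hsK l _ hbddK
  refine ⟨y₀ + (z0 : E), hfibK z0, ?_⟩
  -- B u u is a lower bound of fiberCosts
  have hlb : ∀ c ∈ fiberCosts L B v, B (y₀ + (z0 : E)) (y₀ + (z0 : E)) ≤ c := by
    rintro c ⟨x, hx, rfl⟩
    obtain ⟨y, hyV, w, hw1, hw2, hxy⟩ := hdec x
    have hLy : L y = v := by
      have : L x = L y + L w := by rw [hxy, map_add]
      rw [hx, hw1, add_zero] at this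
      exact this.symm
    have hCx : B x x = B y y := by
      have hbw := key y w hLy hw1 hw2
      have hwb := hBsymm w y
      rw [hxy]
      simp only [map_add, LinearMap.add_apply]
      linarith
    -- y - y₀ lies in K
    have hzK : y - y₀ ∈ K := by
      refine Submodule.mem_inf.mpr ⟨V.sub_mem hyV hy₀V, ?_⟩
      rw [LinearMap.mem_ker, map_sub, hLy, hLy₀, sub_self]
    set z : K := ⟨y - y₀, hzK⟩ with hz
    have hyz : y = y₀ + (z : E) := by simp [hz]
    have h1 := hexpK z
    have h2 := hexpK z0
    have h3 := hz0 z
    rw [hCx, hyz, h1, h2]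
    linarith
  have hmem : B (y₀ + (z0 : E)) (y₀ + (z0 : E)) ∈ fiberCosts L B v :=
    ⟨y₀ + (z0 : E), hfibK z0, rfl⟩
  exact le_antisymm (le_csInf ⟨_, hmem⟩ hlb) (csInf_le ⟨m, hm⟩ hmem)
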